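/- Let (π, H) be a unitary representation of a group G, H ⊇ V a closed subspace that generates H as a G-module, P_V the orthogonal projection onto V, and suppose V is invariant under the commutant π(G)'. Then the map γ : π(G)' → B(V), γ(A) = P_V A P_V, is an injective *-homomorphism whose range is the commutant of {P_V π(g) P_V* : g ∈ G} in B(V). In particular, if the positive-definite function π_V(g) = P_V π(g) P_V* has irreducible commutant (i.e., π_V(G)' = ℂ·1), then π is irreducible. -/

import Mathlib

open scoped ComplexInnerProductSpace

set_option linter.unusedSectionVars false
set_option maxHeartbeats 1000000

namespace Stmt19Aux

variable {G : Type*} [Group G] {H : Type*} [NormedAddCommGroup H]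
  [InnerProductSpace ℂ H] [CompleteSpace H]
  (π : G →* unitary (H →L[ℂ] H)) (V : Submodule ℂ H) [CompleteSpace V]

lemma orthogonalProjection_eq_self_iff {K : Submodule ℂ H} [K.HasOrthogonalProjection] {v : H} :
    ((K.orthogonalProjectionOnto v : K) : H) = v ↔ v ∈ K :=
  Submodule.starProjection_eq_self_iff

lemma sub_orthogonalProjection_mem_orthogonal {K : Submodule ℂ H} [K.HasOrthogonalProjection]
    (v : H) : v - (K.orthogonalProjectionOnto v : H) ∈ Kᗮ :=
  Submodule.sub_starProjection_mem_orthogonal v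

/-- compressed operators -/
noncomputable def pv (g : G) : V →L[ℂ] V :=
  (V.orthogonalProjectionOnto).comp (((π g : H →L[ℂ] H)).comp V.subtypeL)

lemma star_pi (g : G) : star ((π g : H →L[ℂ] H)) = ((π g⁻¹ : H →L[ℂ] H)) := by
  rw [← Unitary.coe_star, Unitary.star_eq_inv, ← map_inv]

lemma inner_pi (g h : G) (x y : H) :
    ⟪(π g : H →L[ℂ] H) x, (π h : H →L[ℂ] H) y⟫ = ⟪(π (h⁻¹ * g) : H →L[ℂ] H) x, y⟫ := by
  have h1 : (π (h⁻¹ * g) : H →L[ℂ] H) x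
      = ((π h⁻¹ : H →L[ℂ] H) : H →L[ℂ] H) ((π g : H →L[ℂ] H) x) := by
    rw [map_mul]
    rfl
  have h2 := ContinuousLinearMap.adjoint_inner_left ((π h : H →L[ℂ] H))
    y ((π g : H →L[ℂ] H) x)
  rw [← ContinuousLinearMap.star_eq_adjoint, star_pi] at h2
  rw [h1, ← h2]

lemma norm_pi (g : G) (x : H) : ‖(π g : H →L[ℂ] H) x‖ = ‖x‖ := by
  have h := inner_pi π g g x x
  simp only [inv_mul_cancel, map_one, OneMemClass.coe_one, ContinuousLinearMap.one_apply] at h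
  have h3 : ‖(π g : H →L[ℂ] H) x‖ ^ 2 = ‖x‖ ^ 2 := by
    rw [← @inner_self_eq_norm_sq ℂ, ← @inner_self_eq_norm_sq ℂ, h]
  calc ‖(π g : H →L[ℂ] H) x‖ = √(‖(π g : H →L[ℂ] H) x‖ ^ 2) :=
        (Real.sqrt_sq (norm_nonneg _)).symm
    _ = √(‖x‖ ^ 2) := by rw [h3]
    _ = ‖x‖ := Real.sqrt_sq (norm_nonneg _)
/-- The natural map `(G →₀ V) → H`, `f ↦ ∑ g, π(g) (f g)`. -/
noncomputable def Phi : (G →₀ V) →ₗ[ℂ] H :=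
  Finsupp.lsum ℂ fun g => ((((π g : H →L[ℂ] H)).comp V.subtypeL : V →L[ℂ] H) : V →ₗ[ℂ] H)

lemma Phi_apply (f : G →₀ V) :
    Phi π V f = f.sum fun g v => (π g : H →L[ℂ] H) (v : H) := by
  rw [Phi, Finsupp.lsum_apply]
  rfl

lemma Phi_single (g : G) (v : V) :
    Phi π V (Finsupp.single g v) = (π g : H →L[ℂ] H) (v : H) := by
  rw [Phi_apply, Finsupp.sum_single_index]
  simp

lemma Phi_mapRange (S : V →L[ℂ] V) (f : G →₀ V) :
    Phi π V (f.mapRange S (map_zero S))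
      = f.sum fun g v => (π g : H →L[ℂ] H) ((S v : H)) := by
  rw [Phi_apply, Finsupp.sum_mapRange_index]
  intro g; simp

lemma star_pv (g : G) : star (pv π V g) = pv π V g⁻¹ := by
  rw [ContinuousLinearMap.star_eq_adjoint, pv, ContinuousLinearMap.adjoint_comp,
    ContinuousLinearMap.adjoint_comp, Submodule.adjoint_orthogonalProjection,
    Submodule.adjoint_subtypeL, ← ContinuousLinearMap.star_eq_adjoint, star_pi, pv,
    ContinuousLinearMap.comp_assoc]

lemma star_comm (S : V →L[ℂ] V) (hS : ∀ g, S * pv π V g = pv π V g * S) (g : G) :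
    star S * pv π V g = pv π V g * star S := by
  calc star S * pv π V g = star S * star (pv π V g⁻¹) := by rw [star_pv, inv_inv]
    _ = star (pv π V g⁻¹ * S) := (star_mul (pv π V g⁻¹) S).symm
    _ = star (S * pv π V g⁻¹) := by rw [hS]
    _ = star (pv π V g⁻¹) * star S := star_mul S (pv π V g⁻¹)
    _ = pv π V g * star S := by rw [star_pv, inv_inv]

lemma inner_pv (k : G) (v w : V) :
    ⟪(π k : H →L[ℂ] H) (v : H), (w : H)⟫ = ⟪pv π V k v, w⟫ := by
  rw [pv]
  rw [show ((V.orthogonalProjectionOnto).comp (((π k : H →L[ℂ] H)).comp V.subtypeL)) v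
      = V.orthogonalProjectionOnto ((π k : H →L[ℂ] H) (v : H)) from rfl]
  rw [Submodule.inner_orthogonalProjectionOnto_eq_of_mem_right]

lemma key_swap (S : V →L[ℂ] V) (hS : ∀ g, S * pv π V g = pv π V g * S) (f f' : G →₀ V) :
    ⟪Phi π V (f.mapRange S (map_zero S)), Phi π V f'⟫
      = ⟪Phi π V f, Phi π V (f'.mapRange ⇑(star S) (map_zero (star S)))⟫ := by
  rw [Phi_mapRange, Phi_apply (f := f'), Phi_apply (f := f), Phi_mapRange]
  rw [Finsupp.sum, Finsupp.sum, Finsupp.sum, Finsupp.sum, sum_inner, sum_inner]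
  refine Finset.sum_congr rfl fun g _ => ?_
  rw [inner_sum, inner_sum]
  refine Finset.sum_congr rfl fun h _ => ?_
  rw [inner_pi, inner_pi, inner_pv, inner_pv]
  have h1 : pv π V (h⁻¹ * g) (S (f g)) = S (pv π V (h⁻¹ * g) (f g)) := by
    have := DFunLike.congr_fun (hS (h⁻¹ * g)) (f g)
    simpa [ContinuousLinearMap.mul_apply] using this.symm
  rw [h1, ContinuousLinearMap.star_eq_adjoint]
  exact ContinuousLinearMap.adjoint_inner_right S _ _ |>.symm ▸ rfl

lemma norm_Phi_mapRange_le (S : V →L[ℂ] V) (f : G →₀ V) :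
    ‖Phi π V (f.mapRange S (map_zero S))‖ ≤ ‖S‖ * (f.support.sum fun g => ‖f g‖) := by
  rw [Phi_mapRange, Finsupp.sum]
  refine (norm_sum_le _ _).trans ?_
  rw [Finset.mul_sum]
  refine Finset.sum_le_sum fun g _ => ?_
  rw [norm_pi]
  exact S.le_opNorm _

lemma cs_step (S : V →L[ℂ] V) (hS : ∀ g, S * pv π V g = pv π V g * S) (f : G →₀ V) :
    ‖Phi π V (f.mapRange S (map_zero S))‖ ^ 2
      ≤ ‖Phi π V f‖ * ‖Phi π V (f.mapRange (star S * S) (map_zero _))‖ := by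
  have h := key_swap π V S hS f (f.mapRange ⇑S (map_zero S))
  have hm : (f.mapRange ⇑S (map_zero S)).mapRange ⇑(star S) (map_zero (star S))
      = f.mapRange ⇑(star S * S) (map_zero _) := by
    ext g
    simp [Finsupp.mapRange_apply, ContinuousLinearMap.mul_apply]
  rw [hm] at h
  calc ‖Phi π V (f.mapRange ⇑S (map_zero S))‖ ^ 2
      = RCLike.re ⟪Phi π V (f.mapRange ⇑S (map_zero S)),
          Phi π V (f.mapRange ⇑S (map_zero S))⟫ := (inner_self_eq_norm_sq _).symm
    _ = RCLike.re ⟪Phi π V f, Phi π V (f.mapRange ⇑(star S * S) (map_zero _))⟫ := by rw [h]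
    _ ≤ ‖(⟪Phi π V f, Phi π V (f.mapRange ⇑(star S * S) (map_zero _))⟫ : ℂ)‖ :=
        RCLike.re_le_norm _
    _ ≤ _ := norm_inner_le_norm _ _

lemma iter_bound (R : V →L[ℂ] V) (hR : ∀ g, R * pv π V g = pv π V g * R)
    (hsa : IsSelfAdjoint R) (f : G →₀ V) (n : ℕ) :
    ‖Phi π V (f.mapRange R (map_zero R))‖ ^ (2 ^ n)
      ≤ ‖Phi π V (f.mapRange ⇑(R ^ (2 ^ n)) (map_zero _))‖ * ‖Phi π V f‖ ^ (2 ^ n - 1) := by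
  induction n with
  | zero => simp
  | succ n ih =>
    have hcomm : ∀ g, R ^ (2 ^ n) * pv π V g = pv π V g * R ^ (2 ^ n) :=
      fun g => (Commute.pow_left (hR g) (2 ^ n))
    have hcs := cs_step π V (R ^ (2 ^ n)) hcomm f
    have hstar : star (R ^ (2 ^ n)) = R ^ (2 ^ n) :=
      (star_pow R (2 ^ n)).trans (by rw [hsa.star_eq])
    have hsap : star (R ^ (2 ^ n)) * R ^ (2 ^ n) = R ^ (2 ^ (n + 1)) := by
      rw [hstar, ← pow_add]
      ring_nf
    rw [hsap] at hcs
    have h1 : ‖Phi π V (f.mapRange R (map_zero R))‖ ^ 2 ^ (n + 1)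
        = (‖Phi π V (f.mapRange R (map_zero R))‖ ^ 2 ^ n) ^ 2 := by
      rw [← pow_mul, pow_succ, mul_comm (2 ^ n) 2, mul_comm]
    rw [h1]
    calc (‖Phi π V (f.mapRange R (map_zero R))‖ ^ 2 ^ n) ^ 2
        ≤ (‖Phi π V (f.mapRange ⇑(R ^ 2 ^ n) (map_zero _))‖ * ‖Phi π V f‖ ^ (2 ^ n - 1)) ^ 2 :=
          pow_le_pow_left₀ (by positivity) ih 2
      _ = ‖Phi π V (f.mapRange ⇑(R ^ 2 ^ n) (map_zero _))‖ ^ 2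
            * (‖Phi π V f‖ ^ (2 ^ n - 1)) ^ 2 := mul_pow _ _ 2
      _ ≤ (‖Phi π V f‖ * ‖Phi π V (f.mapRange ⇑(R ^ 2 ^ (n + 1)) (map_zero _))‖)
            * (‖Phi π V f‖ ^ (2 ^ n - 1)) ^ 2 := by
          refine mul_le_mul_of_nonneg_right hcs (by positivity)
      _ = ‖Phi π V (f.mapRange ⇑(R ^ 2 ^ (n + 1)) (map_zero _))‖
            * ‖Phi π V f‖ ^ (2 ^ (n + 1) - 1) := by
          rw [← pow_mul]
          have h2 : (2 ^ n - 1) * 2 + 1 = 2 ^ (n + 1) - 1 := by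
            have := Nat.one_le_two_pow (n := n)
            rw [pow_succ]
            omega
          rw [← h2, pow_add, pow_one]
          ring

lemma key_sa (R : V →L[ℂ] V) (hR : ∀ g, R * pv π V g = pv π V g * R)
    (hsa : IsSelfAdjoint R) (f : G →₀ V) :
    ‖Phi π V (f.mapRange R (map_zero R))‖ ≤ ‖R‖ * ‖Phi π V f‖ := by
  set x := ‖Phi π V (f.mapRange R (map_zero R))‖ with hxdef
  set c := ‖Phi π V f‖ with hcdef
  set D := f.support.sum fun g => ‖f g‖ with hDdef
  have hx0 : 0 ≤ x := norm_nonneg _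
  have hc0 : 0 ≤ c := norm_nonneg _
  have hD0 : 0 ≤ D := Finset.sum_nonneg fun g _ => norm_nonneg _
  -- case c = 0
  rcases eq_or_lt_of_le hc0 with hc | hc
  · have h2 := cs_step π V R hR f
    have hc' : ‖Phi π V f‖ = 0 := hc.symm
    have hxx : x ^ 2 ≤ 0 := by
      rw [hxdef]
      nlinarith [h2, norm_nonneg (Phi π V (f.mapRange ⇑(star R * R) (map_zero _)))]
    have hx : x = 0 := le_antisymm (by nlinarith [hxx, hx0]) hx0
    rw [hx]
    exact mul_nonneg (show (0:ℝ) ≤ ‖R‖ by exact norm_nonneg R) hc0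
  -- main bound for every n
  have hmain : ∀ n : ℕ, x ^ (2 ^ n) ≤ ‖R‖ ^ (2 ^ n) * D * c ^ (2 ^ n - 1) := by
    intro n
    have h1 := iter_bound π V R hR hsa f n
    have h2 : ‖Phi π V (f.mapRange ⇑(R ^ (2 ^ n)) (map_zero _))‖ ≤ ‖R ^ (2 ^ n)‖ * D :=
      norm_Phi_mapRange_le π V (R ^ (2 ^ n)) f
    have h3' : ‖R ^ (2 ^ n)‖₊ = ‖R‖₊ ^ (2 ^ n) :=
      IsSelfAdjoint.nnnorm_pow_two_pow (E := V →L[ℂ] V) (x := R) hsa n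
    have h3 : ‖R ^ (2 ^ n)‖ = ‖R‖ ^ (2 ^ n) := by
      have h3'' := congrArg NNReal.toReal h3'
      rw [NNReal.coe_pow] at h3''
      exact h3''
    calc x ^ (2 ^ n) ≤ ‖Phi π V (f.mapRange ⇑(R ^ (2 ^ n)) (map_zero _))‖ * c ^ (2 ^ n - 1) := h1
      _ ≤ (‖R ^ (2 ^ n)‖ * D) * c ^ (2 ^ n - 1) :=
          mul_le_mul_of_nonneg_right h2 (by positivity)
      _ = ‖R‖ ^ (2 ^ n) * D * c ^ (2 ^ n - 1) := by rw [h3]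
  -- conclude by contradiction
  by_contra hcon
  push_neg at hcon
  set K := ‖R‖ * c with hKdef
  have hK0 : 0 ≤ K := by positivity
  have hxpos : 0 < x := lt_of_le_of_lt hK0 hcon
  have hRpos : 0 < ‖R‖ := by
    rcases (norm_nonneg R).eq_or_lt with h | h
    · exfalso
      have := hmain 0
      simp only [pow_zero, pow_one, ← h] at this
      nlinarith
    · exact h
  have hKpos : 0 < K := by positivity
  have hx1 : 1 < x / K := (one_lt_div hKpos).2 hcon
  obtain ⟨N, hN⟩ := pow_unbounded_of_one_lt (D / c) hx1
  have h2N : (x / K) ^ N ≤ (x / K) ^ (2 ^ N) :=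
    pow_le_pow_right₀ (le_of_lt hx1) (Nat.le_of_lt (Nat.lt_two_pow_self (n := N)))
  have hb := hmain N
  have hKpow : K ^ (2 ^ N) = ‖R‖ ^ (2 ^ N) * c ^ (2 ^ N) := mul_pow _ _ _
  have hcpow : c ^ (2 ^ N - 1) = c ^ (2 ^ N) / c := by
    rw [pow_sub₀ c (ne_of_gt hc) Nat.one_le_two_pow, pow_one]
    ring
  have hfin : (x / K) ^ (2 ^ N) ≤ D / c := by
    rw [div_pow, div_le_div_iff₀ (by positivity) hc]
    calc x ^ 2 ^ N * c ≤ (‖R‖ ^ (2 ^ N) * D * c ^ (2 ^ N - 1)) * c :=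
          mul_le_mul_of_nonneg_right hb hc0
      _ = D * K ^ (2 ^ N) := by
          rw [hcpow, hKpow]
          field_simp
  have := lt_of_lt_of_le hN (le_trans h2N hfin)
  exact lt_irrefl _ this

lemma key (T : V →L[ℂ] V) (hT : ∀ g, T * pv π V g = pv π V g * T) (f : G →₀ V) :
    ‖Phi π V (f.mapRange T (map_zero T))‖ ≤ ‖T‖ * ‖Phi π V f‖ := by
  have hstarT := star_comm π V T hT
  have hcomm : ∀ g, (star T * T) * pv π V g = pv π V g * (star T * T) :=
    fun g => (Commute.mul_left (hstarT g) (hT g))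
  have hsa : IsSelfAdjoint (star T * T) := by exact IsSelfAdjoint.star_mul_self T
  have h1 := cs_step π V T hT f
  have h2 := key_sa π V (star T * T) hcomm hsa f
  have h3 : ‖star T * T‖ = ‖T‖ * ‖T‖ := by exact CStarRing.norm_star_mul_self (E := V →L[ℂ] V) (x := T)
  have h4 : ‖Phi π V (f.mapRange T (map_zero T))‖ ^ 2 ≤ (‖T‖ * ‖Phi π V f‖) ^ 2 := by
    calc ‖Phi π V (f.mapRange T (map_zero T))‖ ^ 2
        ≤ ‖Phi π V f‖ * ‖Phi π V (f.mapRange (star T * T) (map_zero _))‖ := h1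
      _ ≤ ‖Phi π V f‖ * (‖star T * T‖ * ‖Phi π V f‖) :=
          mul_le_mul_of_nonneg_left h2 (norm_nonneg _)
      _ = (‖T‖ * ‖Phi π V f‖) ^ 2 := by rw [h3]; ring
  calc ‖Phi π V (f.mapRange T (map_zero T))‖
      = √(‖Phi π V (f.mapRange T (map_zero T))‖ ^ 2) := (Real.sqrt_sq (norm_nonneg _)).symm
    _ ≤ √((‖T‖ * ‖Phi π V f‖) ^ 2) := Real.sqrt_le_sqrt h4
    _ = ‖T‖ * ‖Phi π V f‖ := Real.sqrt_sq (by positivity)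

lemma range_Phi :
    LinearMap.range (Phi π V)
      = Submodule.span ℂ (⋃ g : G, ((π g : H →L[ℂ] H)) '' (V : Set H)) := by
  apply le_antisymm
  · rintro x ⟨f, rfl⟩
    rw [Phi_apply]
    refine Submodule.sum_mem _ fun g _ => ?_
    refine Submodule.subset_span ?_
    exact Set.mem_iUnion.2 ⟨g, Set.mem_image_of_mem _ (f g).2⟩
  · rw [Submodule.span_le]
    rintro x hx
    obtain ⟨g, v, hv, rfl⟩ := by simpa using hx
    exact ⟨Finsupp.single g ⟨v, hv⟩, Phi_single π V g ⟨v, hv⟩⟩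

lemma pi_Phi (g : G) (f : G →₀ V) :
    (π g : H →L[ℂ] H) (Phi π V f)
      = Phi π V (Finsupp.mapDomain (fun h => g * h) f) := by
  rw [Phi_apply, Phi_apply, Finsupp.sum_mapDomain_index (by simp) (by simp),
    map_finsuppSum]
  refine Finsupp.sum_congr fun h _ => ?_
  rw [show (π (g * h) : H →L[ℂ] H) = (π g : H →L[ℂ] H) * (π h : H →L[ℂ] H) by
    rw [map_mul]; rfl]
  rfl

lemma surj (T : V →L[ℂ] V) (hT : ∀ g, T * pv π V g = pv π V g * T)
    (hgen : (Submodule.span ℂ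
      (⋃ g : G, ((π g : H →L[ℂ] H)) '' (V : Set H))).topologicalClosure = ⊤) :
    ∃ A : H →L[ℂ] H,
      (∀ g : G, A * (π g : H →L[ℂ] H) = (π g : H →L[ℂ] H) * A) ∧
      (V.orthogonalProjectionOnto).comp (A.comp V.subtypeL) = T := by
  classical
  set Psi : (G →₀ V) →ₗ[ℂ] H :=
    (Phi π V).comp (Finsupp.mapRange.linearMap (T : V →ₗ[ℂ] V)) with hPsidef
  have hPsi : ∀ f, Psi f = Phi π V (f.mapRange ⇑T (map_zero T)) := by
    intro f
    rw [hPsidef, LinearMap.comp_apply]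
    congr 1
  have hbound : ∀ f, ‖Psi f‖ ≤ ‖T‖ * ‖Phi π V f‖ := fun f => key π V T hT f
  set K0 := LinearMap.range (Phi π V) with hK0def
  have hker : LinearMap.ker (Phi π V) ≤ LinearMap.ker Psi := by
    intro f hf
    rw [LinearMap.mem_ker] at hf ⊢
    have := hbound f
    rw [hf, norm_zero, mul_zero] at this
    exact norm_le_zero_iff.1 this
  set A0lin : K0 →ₗ[ℂ] H :=
    ((LinearMap.ker (Phi π V)).liftQ Psi hker).comp
      ((LinearMap.quotKerEquivRange (Phi π V)).symm : K0 →ₗ[ℂ] _) with hA0def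
  have hA0 : ∀ f : G →₀ V, A0lin ⟨Phi π V f, LinearMap.mem_range_self _ f⟩ = Psi f := by
    intro f
    have he : (LinearMap.quotKerEquivRange (Phi π V)).symm
        ⟨Phi π V f, LinearMap.mem_range_self _ f⟩ = Submodule.Quotient.mk f := by
      exact LinearMap.quotKerEquivRange_symm_apply_image (f := Phi π V) f
        (LinearMap.mem_range_self _ f)
    rw [hA0def, LinearMap.comp_apply]
    simp only [LinearEquiv.coe_coe]
    rw [he, Submodule.liftQ_apply]
  have hA0bd : ∀ x : K0, ‖A0lin x‖ ≤ ‖T‖ * ‖x‖ := by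
    rintro ⟨x, hx⟩
    obtain ⟨f, rfl⟩ := hx
    rw [hA0 f]
    exact hbound f
  set A0 : K0 →L[ℂ] H := A0lin.mkContinuous ‖T‖ hA0bd with hA0cdef
  have hdense : DenseRange (K0.subtypeL : K0 →L[ℂ] H) := by
    have h1 : Dense (K0 : Set H) := by
      rw [Submodule.dense_iff_topologicalClosure_eq_top, hK0def, range_Phi]
      exact hgen
    have h2 : Set.range (K0.subtypeL : K0 →L[ℂ] H) = (K0 : Set H) := Subtype.range_val
    rw [DenseRange, h2]
    exact h1
  have huni : IsUniformInducing (K0.subtypeL : K0 →L[ℂ] H) :=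
    isUniformEmbedding_subtype_val.isUniformInducing
  set A : H →L[ℂ] H := A0.extend (K0.subtypeL : K0 →L[ℂ] H) with hAdef
  have hAPhi : ∀ f : G →₀ V, A (Phi π V f) = Phi π V (f.mapRange ⇑T (map_zero T)) := by
    intro f
    have : Phi π V f = (K0.subtypeL : K0 →L[ℂ] H) ⟨Phi π V f, LinearMap.mem_range_self _ f⟩ :=
      rfl
    rw [this, hAdef, ContinuousLinearMap.extend_eq (h_dense := hdense) (h_e := huni)]
    calc A0 ⟨Phi π V f, LinearMap.mem_range_self _ f⟩
        = A0lin ⟨Phi π V f, LinearMap.mem_range_self _ f⟩ := rfl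
      _ = Psi f := hA0 f
      _ = _ := hPsi f
  refine ⟨A, ?_, ?_⟩
  · intro g
    have hcont1 : Continuous fun x => A ((π g : H →L[ℂ] H) x) :=
      A.continuous.comp (π g : H →L[ℂ] H).continuous
    have hcont2 : Continuous fun x => (π g : H →L[ℂ] H) (A x) :=
      (π g : H →L[ℂ] H).continuous.comp A.continuous
    ext x
    rw [ContinuousLinearMap.mul_apply, ContinuousLinearMap.mul_apply]
    have hd : Dense (K0 : Set H) := by
      rw [Submodule.dense_iff_topologicalClosure_eq_top, hK0def, range_Phi]
      exact hgen
    have hsub : (K0 : Set H) ⊆ {x | A ((π g : H →L[ℂ] H) x) = (π g : H →L[ℂ] H) (A x)} := by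
      rintro y ⟨f, rfl⟩
      show A ((π g : H →L[ℂ] H) (Phi π V f)) = (π g : H →L[ℂ] H) (A (Phi π V f))
      rw [pi_Phi, hAPhi, hAPhi,
        ← Finsupp.mapDomain_mapRange _ _ _ _ (map_add T), ← pi_Phi]
    have hclos := closure_minimal hsub (isClosed_eq hcont1 hcont2)
    rw [hd.closure_eq] at hclos
    exact hclos (Set.mem_univ x)
  · ext v
    have h1 : (V.subtypeL : V →L[ℂ] H) v = Phi π V (Finsupp.single 1 v) := by
      rw [Phi_single]
      simp only [map_one, OneMemClass.coe_one, ContinuousLinearMap.one_apply]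
      rfl
    simp only [ContinuousLinearMap.comp_apply]
    rw [h1, hAPhi, Finsupp.mapRange_single, Phi_single]
    simp only [map_one, OneMemClass.coe_one, ContinuousLinearMap.one_apply]
    exact congrArg Subtype.val (Submodule.orthogonalProjectionOnto_mem_subspace_eq_self (T v))

lemma star_commutant (A : H →L[ℂ] H)
    (hA : ∀ g : G, A * (π g : H →L[ℂ] H) = (π g : H →L[ℂ] H) * A) (g : G) :
    star A * (π g : H →L[ℂ] H) = (π g : H →L[ℂ] H) * star A := by
  have h := congrArg star (hA g⁻¹)
  rw [star_mul, star_mul, star_pi, inv_inv] at h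
  exact h.symm

lemma proj_apply_orthogonal (A : H →L[ℂ] H)
    (hA : ∀ g : G, A * (π g : H →L[ℂ] H) = (π g : H →L[ℂ] H) * A)
    (hinv : ∀ B : H →L[ℂ] H,
      (∀ g : G, B * (π g : H →L[ℂ] H) = (π g : H →L[ℂ] H) * B) →
      ∀ v ∈ V, B v ∈ V)
    (w : H) (hw : w ∈ Vᗮ) : V.orthogonalProjectionOnto (A w) = 0 := by
  apply Submodule.orthogonalProjectionOnto_apply_of_mem_orthogonal
  rw [Submodule.mem_orthogonal]
  intro y hy
  have h1 : ⟪(ContinuousLinearMap.adjoint A) y, w⟫ = ⟪y, A w⟫ :=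
    ContinuousLinearMap.adjoint_inner_left A w y
  rw [← h1]
  refine (Submodule.mem_orthogonal V w).1 hw _ ?_
  have := hinv (star A) (star_commutant π A hA) y hy
  rwa [ContinuousLinearMap.star_eq_adjoint] at this

lemma compress_comm (A : H →L[ℂ] H)
    (hA : ∀ g : G, A * (π g : H →L[ℂ] H) = (π g : H →L[ℂ] H) * A)
    (hinv : ∀ B : H →L[ℂ] H,
      (∀ g : G, B * (π g : H →L[ℂ] H) = (π g : H →L[ℂ] H) * B) →
      ∀ v ∈ V, B v ∈ V) (g : G) :
    ((V.orthogonalProjectionOnto).comp (A.comp V.subtypeL)) * pv π V g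
      = pv π V g * ((V.orthogonalProjectionOnto).comp (A.comp V.subtypeL)) := by
  refine ContinuousLinearMap.ext fun v => ?_
  have hAv : A (v : H) ∈ V := hinv A hA (v : H) v.2
  -- RHS
  have hR : (pv π V g * ((V.orthogonalProjectionOnto).comp (A.comp V.subtypeL))) v
      = V.orthogonalProjectionOnto (A ((π g : H →L[ℂ] H) (v : H))) := by
    rw [ContinuousLinearMap.mul_apply]
    show V.orthogonalProjectionOnto ((π g : H →L[ℂ] H)
      ((V.orthogonalProjectionOnto (A (v : H)) : H))) = _
    rw [orthogonalProjection_eq_self_iff.2 hAv]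
    have := DFunLike.congr_fun (hA g) (v : H)
    rw [ContinuousLinearMap.mul_apply, ContinuousLinearMap.mul_apply] at this
    rw [← this]
  rw [hR]
  -- LHS
  rw [ContinuousLinearMap.mul_apply]
  show V.orthogonalProjectionOnto
      (A ((V.orthogonalProjectionOnto ((π g : H →L[ℂ] H) (v : H)) : H))) = _
  set z := (π g : H →L[ℂ] H) (v : H) with hz
  have hdecomp : z = ((V.orthogonalProjectionOnto z : H)) + (z - (V.orthogonalProjectionOnto z : H)) :=
    (add_sub_cancel _ _).symm
  have hw : z - (V.orthogonalProjectionOnto z : H) ∈ Vᗮ :=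
    sub_orthogonalProjection_mem_orthogonal z
  have : V.orthogonalProjectionOnto (A z)
      = V.orthogonalProjectionOnto (A ((V.orthogonalProjectionOnto z : H))) := by
    conv_lhs => rw [hdecomp]
    rw [map_add, map_add, proj_apply_orthogonal π V A hA hinv _ hw, add_zero]
  exact this.symm

lemma injective_compress (A B : H →L[ℂ] H)
    (hA : ∀ g : G, A * (π g : H →L[ℂ] H) = (π g : H →L[ℂ] H) * A)
    (hB : ∀ g : G, B * (π g : H →L[ℂ] H) = (π g : H →L[ℂ] H) * B)
    (hinv : ∀ C : H →L[ℂ] H,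
      (∀ g : G, C * (π g : H →L[ℂ] H) = (π g : H →L[ℂ] H) * C) →
      ∀ v ∈ V, C v ∈ V)
    (hgen : (Submodule.span ℂ
      (⋃ g : G, ((π g : H →L[ℂ] H)) '' (V : Set H))).topologicalClosure = ⊤)
    (heq : (V.orthogonalProjectionOnto).comp (A.comp V.subtypeL)
      = (V.orthogonalProjectionOnto).comp (B.comp V.subtypeL)) : A = B := by
  set C := A - B with hC
  have hCcomm : ∀ g : G, C * (π g : H →L[ℂ] H) = (π g : H →L[ℂ] H) * C := by
    intro g
    rw [hC, sub_mul, mul_sub, hA g, hB g]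
  have hCV : ∀ v ∈ V, C v ∈ V := hinv C hCcomm
  have hCzero : ∀ v : V, C (v : H) = 0 := by
    intro v
    have h1 : V.orthogonalProjectionOnto (C (v : H)) = 0 := by
      have := DFunLike.congr_fun heq v
      simp only [ContinuousLinearMap.comp_apply] at this
      show V.orthogonalProjectionOnto ((A - B) ((V.subtypeL) v)) = 0
      rw [ContinuousLinearMap.sub_apply, map_sub, this, sub_self]
    have h2 : ((V.orthogonalProjectionOnto (C (v : H))) : H) = C (v : H) :=
      orthogonalProjection_eq_self_iff.2 (hCV (v : H) v.2)
    rw [h1] at h2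
    simpa using h2.symm
  have hker : (Submodule.span ℂ (⋃ g : G, ((π g : H →L[ℂ] H)) '' (V : Set H)))
      ≤ LinearMap.ker (C : H →ₗ[ℂ] H) := by
    rw [Submodule.span_le]
    rintro x hx
    obtain ⟨g, v, hv, rfl⟩ := by simpa using hx
    rw [SetLike.mem_coe, LinearMap.mem_ker]
    show C ((π g : H →L[ℂ] H) v) = 0
    have := DFunLike.congr_fun (hCcomm g) v
    rw [ContinuousLinearMap.mul_apply, ContinuousLinearMap.mul_apply] at this
    rw [this, hCzero ⟨v, hv⟩, map_zero]
  have hclosed : IsClosed ((LinearMap.ker (C : H →ₗ[ℂ] H) : Submodule ℂ H) : Set H) := by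
    have : (LinearMap.ker (C : H →ₗ[ℂ] H) : Set H) = C ⁻¹' {0} := by
      ext x
      simp [LinearMap.mem_ker]
    rw [this]
    exact IsClosed.preimage C.continuous isClosed_singleton
  have htop := Submodule.topologicalClosure_minimal _ hker hclosed
  rw [hgen, top_le_iff] at htop
  have : ∀ x : H, C x = 0 := by
    intro x
    have : x ∈ LinearMap.ker (C : H →ₗ[ℂ] H) := htop ▸ Submodule.mem_top
    exact this
  ext x
  have := this x
  rw [hC] at this
  exact sub_eq_zero.1 this

lemma mult_compress (A B : H →L[ℂ] H)
    (hBV : ∀ v ∈ V, B v ∈ V) :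
    (V.orthogonalProjectionOnto).comp ((A * B).comp V.subtypeL)
      = ((V.orthogonalProjectionOnto).comp (A.comp V.subtypeL))
        * ((V.orthogonalProjectionOnto).comp (B.comp V.subtypeL)) := by
  refine ContinuousLinearMap.ext fun v => ?_
  have h : ((V.orthogonalProjectionOnto (B (v : H)) : H)) = B (v : H) :=
    orthogonalProjection_eq_self_iff.2 (hBV (v : H) v.2)
  show V.orthogonalProjectionOnto (A (B (v : H)))
      = V.orthogonalProjectionOnto (A ((V.orthogonalProjectionOnto (B (v : H)) : H)))
  rw [h]

lemma star_compress (A : H →L[ℂ] H) :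
    (V.orthogonalProjectionOnto).comp ((star A).comp V.subtypeL)
      = star ((V.orthogonalProjectionOnto).comp (A.comp V.subtypeL)) := by
  have hmain : (V.orthogonalProjectionOnto).comp ((star A).comp V.subtypeL)
      = ContinuousLinearMap.adjoint ((V.orthogonalProjectionOnto).comp (A.comp V.subtypeL)) := by
    rw [ContinuousLinearMap.eq_adjoint_iff]
    intro v w
    have hL : ⟪((V.orthogonalProjectionOnto).comp ((star A).comp V.subtypeL)) v, w⟫
        = ⟪(star A) (v : H), (w : H)⟫ := by
      show ⟪V.orthogonalProjectionOnto ((star A) (v : H)), w⟫ = _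
      rw [Submodule.inner_orthogonalProjectionOnto_eq_of_mem_right]
    have hR : ⟪v, ((V.orthogonalProjectionOnto).comp (A.comp V.subtypeL)) w⟫
        = ⟪(v : H), A (w : H)⟫ := by
      show ⟪v, V.orthogonalProjectionOnto (A (w : H))⟫ = _
      rw [Submodule.inner_orthogonalProjectionOnto_eq_of_mem_left]
    rw [hL, hR, ContinuousLinearMap.star_eq_adjoint]
    exact ContinuousLinearMap.adjoint_inner_left A (w : H) (v : H)
  rw [hmain]
  exact (ContinuousLinearMap.star_eq_adjoint _).symm

lemma compress_smul_one (c : ℂ) :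
    (V.orthogonalProjectionOnto).comp ((c • (1 : H →L[ℂ] H)).comp V.subtypeL)
      = c • (1 : V →L[ℂ] V) := by
  refine ContinuousLinearMap.ext fun v => ?_
  show V.orthogonalProjectionOnto ((c • (1 : H →L[ℂ] H)) (v : H)) = c • v
  rw [ContinuousLinearMap.smul_apply, ContinuousLinearMap.one_apply, map_smul]
  congr 1
  exact Submodule.orthogonalProjectionOnto_mem_subspace_eq_self v

end Stmt19Aux

/-- Let `(π, H)` be a unitary representation of `G`, `V ⊆ H` a closed subspace
generating `H` as a `G`-module and invariant under the commutant `π(G)'`. Then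
`γ(A) = P_V A P_V` is an injective `*`-homomorphism from `π(G)'` onto the commutant of
`π_V(G) = {P_V π(g) P_V*}` in `B(V)`. In particular, if `π_V(G)' = ℂ·1`, then `π` is
irreducible. -/
theorem stmt_19 {G : Type*} [Group G] {H : Type*} [NormedAddCommGroup H]
    [InnerProductSpace ℂ H] [CompleteSpace H]
    (π : G →* unitary (H →L[ℂ] H))
    (V : Submodule ℂ H) [CompleteSpace V]
    (hgen : (Submodule.span ℂ
        (⋃ g : G, ((π g : H →L[ℂ] H)) '' (V : Set H))).topologicalClosure = ⊤)
    (hinv : ∀ A : H →L[ℂ] H,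
      (∀ g : G, A * (π g : H →L[ℂ] H) = (π g : H →L[ℂ] H) * A) →
      ∀ v ∈ V, A v ∈ V) :
    -- γ is injective on the commutant
    (∀ A B : H →L[ℂ] H,
      (∀ g : G, A * (π g : H →L[ℂ] H) = (π g : H →L[ℂ] H) * A) →
      (∀ g : G, B * (π g : H →L[ℂ] H) = (π g : H →L[ℂ] H) * B) →
      (V.orthogonalProjectionOnto).comp (A.comp V.subtypeL) =
        (V.orthogonalProjectionOnto).comp (B.comp V.subtypeL) → A = B) ∧
    -- γ is a *-homomorphism on the commutant
    (∀ A B : H →L[ℂ] H,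
      (∀ g : G, A * (π g : H →L[ℂ] H) = (π g : H →L[ℂ] H) * A) →
      (∀ g : G, B * (π g : H →L[ℂ] H) = (π g : H →L[ℂ] H) * B) →
      (V.orthogonalProjectionOnto).comp ((A * B).comp V.subtypeL) =
        ((V.orthogonalProjectionOnto).comp (A.comp V.subtypeL)) *
          ((V.orthogonalProjectionOnto).comp (B.comp V.subtypeL)) ∧
      (V.orthogonalProjectionOnto).comp ((star A).comp V.subtypeL) =
        star ((V.orthogonalProjectionOnto).comp (A.comp V.subtypeL))) ∧
    -- the range of γ is the commutant of π_V(G)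
    (∀ T : V →L[ℂ] V,
      (∀ g : G, T * ((V.orthogonalProjectionOnto).comp ((π g : H →L[ℂ] H).comp V.subtypeL)) =
        ((V.orthogonalProjectionOnto).comp ((π g : H →L[ℂ] H).comp V.subtypeL)) * T) ↔
      (∃ A : H →L[ℂ] H,
        (∀ g : G, A * (π g : H →L[ℂ] H) = (π g : H →L[ℂ] H) * A) ∧
        (V.orthogonalProjectionOnto).comp (A.comp V.subtypeL) = T)) ∧
    -- irreducibility criterion
    ((∀ T : V →L[ℂ] V,
        (∀ g : G, T * ((V.orthogonalProjectionOnto).comp ((π g : H →L[ℂ] H).comp V.subtypeL)) =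
          ((V.orthogonalProjectionOnto).comp ((π g : H →L[ℂ] H).comp V.subtypeL)) * T) →
        ∃ c : ℂ, T = c • 1) →
      ∀ A : H →L[ℂ] H,
        (∀ g : G, A * (π g : H →L[ℂ] H) = (π g : H →L[ℂ] H) * A) →
        ∃ c : ℂ, A = c • 1) := by
  refine ⟨?_, ?_, ?_, ?_⟩
  · exact fun A B hA hB heq => Stmt19Aux.injective_compress π V A B hA hB hinv hgen heq
  · intro A B hA hB
    refine ⟨Stmt19Aux.mult_compress V A B (hinv B hB), Stmt19Aux.star_compress V A⟩
  · intro T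
    constructor
    · intro hT
      exact Stmt19Aux.surj π V T (fun g => hT g) hgen
    · rintro ⟨A, hA, rfl⟩ g
      exact Stmt19Aux.compress_comm π V A hA hinv g
  · intro hcrit A hA
    obtain ⟨c, hc⟩ := hcrit ((V.orthogonalProjectionOnto).comp (A.comp V.subtypeL))
      (fun g => Stmt19Aux.compress_comm π V A hA hinv g)
    refine ⟨c, ?_⟩
    have hone : ∀ g : G, (c • (1 : H →L[ℂ] H)) * (π g : H →L[ℂ] H)
        = (π g : H →L[ℂ] H) * (c • (1 : H →L[ℂ] H)) := by
      intro g
      rw [smul_mul_assoc, one_mul, mul_smul_comm, mul_one]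
    refine Stmt19Aux.injective_compress π V A (c • 1) hA hone hinv hgen ?_
    rw [hc, Stmt19Aux.compress_smul_one]
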